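/- Any minimal χ-self-orthogonal extension of a submodule C ⊆ (Z_{p^a})^{2n} has entanglement degree equal to (1/2)·rank(C / (C ∩ C^{⊥_s})). -/

import Mathlib

open scoped BigOperators

/-- The symplectic inner product on `R^{2n}`: `⟨(x,y) | (x',y')⟩ₛ = y·x' − y'·x`. -/
def symp {R : Type*} [CommRing R] {n : ℕ}
    (u v : (Fin n → R) × (Fin n → R)) : R :=
  dotProduct u.2 v.1 - dotProduct v.2 u.1

/-- Puncturing a vector of `R^{2(n+c)}` at the coordinates
`n+1,…,n+c, 2n+1,…,2n+2c` (the last `c` coordinates of each half). -/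
def punct {R : Type*} (n c : ℕ)
    (u : (Fin (n + c) → R) × (Fin (n + c) → R)) :
    (Fin n → R) × (Fin n → R) :=
  (fun i => u.1 (Fin.castAdd c i), fun i => u.2 (Fin.castAdd c i))

/-- The `χ`-symplectic dual (as a set) of a set `C ⊆ R^{2n}`. -/
def chiDualSet {R : Type*} [CommRing R] {n : ℕ} (χ : R → ℂ)
    (C : Set ((Fin n → R) × (Fin n → R))) : Set ((Fin n → R) × (Fin n → R)) :=
  {v | ∀ c ∈ C, χ (symp c v) = 1}

/-- The `t`-th `χ`-symplectic dual (as a set): symplectic products whose character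
value is a `pt`-th root of unity (`pt = p^t`). -/
def chiDualSetT {R : Type*} [CommRing R] {n : ℕ} (χ : R → ℂ)
    (C : Set ((Fin n → R) × (Fin n → R))) (pt : ℕ) :
    Set ((Fin n → R) × (Fin n → R)) :=
  {v | ∀ c ∈ C, (χ (symp c v)) ^ pt = 1}

/-- The rank (minimal number of generators) of the quotient of the additive group
generated by `C` modulo `D`: the least `k` such that `k` elements of `C` generate
`C` modulo `D`. -/
noncomputable def relRank {V : Type*} [AddCommGroup V] (C D : Set V) : ℕ :=
  sInf {k : ℕ | ∃ f : Fin k → V, (∀ i, f i ∈ C) ∧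
    ∀ x ∈ C, ∃ g : Fin k → ℤ, x - ∑ i, g i • f i ∈ D}

/-- The generating character `χ(z) = exp(2πi z / p^a)` of `Z_{p^a}`. -/
noncomputable def chiZ (p a : ℕ) (z : ZMod (p ^ a)) : ℂ :=
  Complex.exp (2 * Real.pi * Complex.I * (z.val : ℂ) / ((p : ℂ) ^ a))


open scoped BigOperators


section SympBasic
variable {R : Type*} [CommRing R] {n : ℕ}

abbrev VV (R : Type*) (n : ℕ) := (Fin n → R) × (Fin n → R)

lemma symp_self (u : VV R n) : symp u u = 0 := by simp [symp]

lemma symp_comm (u v : VV R n) : symp u v = - symp v u := by simp [symp]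

lemma symp_zero_left (v : VV R n) : symp 0 v = 0 := by simp [symp]

lemma symp_zero_right (u : VV R n) : symp u (0 : VV R n) = 0 := by simp [symp]

lemma symp_add_left (u u' v : VV R n) : symp (u + u') v = symp u v + symp u' v := by
  simp [symp, add_dotProduct, dotProduct_add]; ring

lemma symp_add_right (u v v' : VV R n) : symp u (v + v') = symp u v + symp u v' := by
  simp [symp, add_dotProduct, dotProduct_add]; ring

lemma symp_smul_left (r : R) (u v : VV R n) : symp (r • u) v = r * symp u v := by
  simp [symp, smul_dotProduct, dotProduct_smul, smul_eq_mul]; ring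

lemma symp_smul_right (r : R) (u v : VV R n) : symp u (r • v) = r * symp u v := by
  simp [symp, smul_dotProduct, dotProduct_smul, smul_eq_mul]; ring

lemma symp_zsmul_left (z : ℤ) (u v : VV R n) : symp (z • u) v = (z : R) * symp u v := by
  rw [← Int.cast_smul_eq_zsmul R z u, symp_smul_left]

lemma symp_sub_left (u u' v : VV R n) : symp (u - u') v = symp u v - symp u' v := by
  simp [symp, sub_dotProduct, dotProduct_sub]; ring

lemma symp_sub_right (u v v' : VV R n) : symp u (v - v') = symp u v - symp u v' := by
  simp [symp, sub_dotProduct, dotProduct_sub]; ring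

lemma symp_sum_left {ι : Type*} (s : Finset ι) (f : ι → VV R n) (v : VV R n) :
    symp (∑ i ∈ s, f i) v = ∑ i ∈ s, symp (f i) v := by
  classical
  induction s using Finset.induction_on with
  | empty => simp [symp_zero_left]
  | insert _ _ h ih => rw [Finset.sum_insert h, Finset.sum_insert h, symp_add_left, ih]

end SympBasic


lemma chiZ_eq_one_iff (p a : ℕ) (hp : p.Prime) (z : ZMod (p ^ a)) :
    chiZ p a z = 1 ↔ z = 0 := by
  haveI : NeZero (p ^ a) := ⟨pow_ne_zero a hp.ne_zero⟩
  have hp0 : (p : ℂ) ≠ 0 := by exact_mod_cast hp.ne_zero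
  have hpa : ((p : ℂ) ^ a) ≠ 0 := pow_ne_zero a hp0
  have h2 : (2 : ℂ) * Real.pi * Complex.I ≠ 0 := by
    simp [Real.pi_ne_zero, Complex.I_ne_zero]
  constructor
  · intro h
    rw [chiZ, Complex.exp_eq_one_iff] at h
    obtain ⟨m, hm⟩ := h
    have hval : (z.val : ℂ) = m * (p : ℂ) ^ a := by
      field_simp at hm
      linear_combination hm
    have hdvd : (p ^ a : ℕ) ∣ z.val := by
      have h3 : ((z.val : ℤ) : ℂ) = ((((p^a : ℕ) : ℤ) * m : ℤ) : ℂ) := by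
        push_cast; rw [hval]; ring
      have h4 : (z.val : ℤ) = ((p^a : ℕ) : ℤ) * m := by exact_mod_cast h3
      have h5 : ((p^a : ℕ) : ℤ) ∣ (z.val : ℤ) := ⟨m, h4⟩
      exact_mod_cast h5
    have hlt : z.val < p ^ a := ZMod.val_lt z
    exact (ZMod.val_eq_zero z).mp (Nat.eq_zero_of_dvd_of_lt hdvd hlt)
  · intro h
    subst h
    simp [chiZ, ZMod.val_zero]

section Chain
variable {p a : ℕ}

lemma zmod_natCast_val_eq (hp : p.Prime) (x : ZMod (p^a)) : ((x.val : ℕ) : ZMod (p^a)) = x := by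
  haveI : NeZero (p ^ a) := ⟨pow_ne_zero a hp.ne_zero⟩
  exact ZMod.natCast_rightInverse x

/-- Unit decomposition in `ZMod (p^a)`. -/
lemma zmod_unit_decomp (hp : p.Prime) (x : ZMod (p^a)) (hx : x ≠ 0) :
    (x.val.factorization p) < a ∧ ((p : ZMod (p^a)) ^ (x.val.factorization p) ∣ x)
      ∧ (x ∣ (p : ZMod (p^a)) ^ (x.val.factorization p)) := by
  haveI : NeZero (p ^ a) := ⟨pow_ne_zero a hp.ne_zero⟩
  have ha : 0 < a := by
    rcases Nat.eq_zero_or_pos a with h | h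
    · exfalso; subst h
      haveI : Subsingleton (ZMod (p ^ 0)) := by rw [pow_zero]; infer_instance
      exact hx (Subsingleton.elim x 0)
    · exact h
  set n := x.val with hn
  have hn0 : n ≠ 0 := fun h => hx ((ZMod.val_eq_zero x).mp h)
  set v := n.factorization p with hv
  have h1 : p ^ v ∣ n := Nat.ordProj_dvd n p
  set m := n / p ^ v with hm
  have hnm : p ^ v * m = n := Nat.ordProj_mul_ordCompl_eq_self n p
  have hmp : ¬ p ∣ m := Nat.not_dvd_ordCompl hp hn0
  have hco : m.Coprime (p^a) := (((Nat.Prime.coprime_iff_not_dvd hp).mpr hmp).symm).pow_right a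
  have hxeq : x = (p : ZMod (p^a)) ^ v * (m : ZMod (p^a)) := by
    have h2 := congrArg (fun k : ℕ => (k : ZMod (p^a))) hnm
    simp only [Nat.cast_mul, Nat.cast_pow] at h2
    calc x = ((n : ℕ) : ZMod (p^a)) := (zmod_natCast_val_eq hp x).symm
    _ = _ := h2.symm
  have hunit : IsUnit (m : ZMod (p^a)) := (ZMod.isUnit_iff_coprime m (p^a)).mpr hco
  refine ⟨?_, ⟨(m : ZMod (p^a)), hxeq⟩, ?_⟩
  · have hle : p ^ v ≤ n := Nat.le_of_dvd (Nat.pos_of_ne_zero hn0) h1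
    have hlt : n < p ^ a := ZMod.val_lt x
    exact (Nat.pow_lt_pow_iff_right hp.one_lt).mp (lt_of_le_of_lt hle hlt)
  · obtain ⟨u, hu⟩ := hunit
    refine ⟨(u⁻¹ : (ZMod (p^a))ˣ), ?_⟩
    rw [hxeq, ← hu, mul_assoc]
    simp

/-- `p^(v x)` divides `x` for `x ≠ 0`. -/
lemma exists_dvd_all (hp : p.Prime) {ι : Type*} [Fintype ι]
    (g : ι → ZMod (p^a)) (hg : ∃ i, g i ≠ 0) :
    ∃ i₀, g i₀ ≠ 0 ∧ ∀ i, g i₀ ∣ g i := by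
  classical
  set s : Finset ι := Finset.univ.filter (fun i => g i ≠ 0) with hs
  have hsne : s.Nonempty := by
    obtain ⟨i, hi⟩ := hg
    exact ⟨i, by simp [hs, hi]⟩
  obtain ⟨i₀, hi₀s, hmin⟩ :=
    Finset.exists_min_image s (fun i => (g i).val.factorization p) hsne
  have hi₀ : g i₀ ≠ 0 := by simpa [hs] using hi₀s
  obtain ⟨_, _, hdvd₀⟩ := zmod_unit_decomp hp (g i₀) hi₀
  refine ⟨i₀, hi₀, fun i => ?_⟩
  by_cases h : g i = 0
  · rw [h]; exact dvd_zero _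
  · obtain ⟨_, hdvd_i, _⟩ := zmod_unit_decomp hp (g i) h
    have hle : (g i₀).val.factorization p ≤ (g i).val.factorization p :=
      hmin i (by simp [hs, h])
    exact hdvd₀.trans ((pow_dvd_pow _ hle).trans hdvd_i)

end Chain


lemma zmod_addSubgroup_gen (N : ℕ) (H : AddSubgroup (ZMod N)) :
    ∃ b ∈ H, ∀ x ∈ H, ∃ z : ℤ, z • b = x := by
  have hsurj : Function.Surjective (Int.cast : ℤ → ZMod N) := ZMod.intCast_surjective
  set f := Int.castAddHom (ZMod N) with hf
  obtain ⟨g, hg⟩ := Int.subgroup_cyclic (H.comap f)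
  refine ⟨f g, ?_, fun x hx => ?_⟩
  · have : g ∈ H.comap f := hg ▸ AddSubgroup.mem_closure_singleton.mpr ⟨1, one_smul _ _⟩
    exact this
  · obtain ⟨y, hy⟩ := hsurj x
    have hy' : y ∈ H.comap f := by simp [hf, AddSubgroup.mem_comap, hy, hx]
    rw [hg] at hy'
    obtain ⟨z, hz⟩ := AddSubgroup.mem_closure_singleton.mp hy'
    exact ⟨z, by rw [← map_zsmul f z g, hz]; simpa [hf] using hy⟩

lemma pi_addSubgroup_gen (N : ℕ) : ∀ (m : ℕ) (G : AddSubgroup (Fin m → ZMod N)),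
    ∃ t : Fin m → (Fin m → ZMod N), (∀ i, t i ∈ G) ∧
      ∀ g ∈ G, ∃ co : Fin m → ℤ, g = ∑ i, co i • t i := by
  intro m
  induction m with
  | zero =>
    intro G
    refine ⟨fun _ => 0, fun i => i.elim0, fun g _ => ⟨0, ?_⟩⟩
    simp
    funext i; exact i.elim0
  | succ m ih =>
    intro G
    classical
    set A := ZMod N
    let π : (Fin (m+1) → A) →+ A := Pi.evalAddMonoidHom (fun _ => A) (Fin.last m)
    let ρ : (Fin (m+1) → A) →+ (Fin m → A) :=
      AddMonoidHom.mk' (fun v => fun i => v i.castSucc) (fun u v => rfl)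
    obtain ⟨b, hbmem, hbgen⟩ := zmod_addSubgroup_gen N (G.map π)
    obtain ⟨g₀, hg₀G, hg₀⟩ := hbmem
    set G' : AddSubgroup (Fin m → A) := (G ⊓ π.ker).map ρ with hG'
    obtain ⟨t', ht'mem, ht'gen⟩ := ih G'
    have hlift : ∀ i, ∃ w, w ∈ G ⊓ π.ker ∧ ρ w = t' i := by
      intro i
      obtain ⟨w, hw, hweq⟩ := ht'mem i
      exact ⟨w, hw, hweq⟩
    choose w hwmem hweq using hlift
    refine ⟨Fin.snoc (fun i => w i) g₀, ?_, ?_⟩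
    · intro i
      refine Fin.lastCases ?_ ?_ i
      · simpa using hg₀G
      · intro j; simpa using (AddSubgroup.mem_inf.mp (hwmem j)).1
    · intro g hg
      obtain ⟨z, hz⟩ := hbgen (π g) ⟨g, hg, rfl⟩
      set g₁ := g - z • g₀ with hg₁
      have hg₁G : g₁ ∈ G ⊓ π.ker := by
        refine AddSubgroup.mem_inf.mpr ⟨sub_mem hg (zsmul_mem hg₀G z), ?_⟩
        simp only [AddMonoidHom.mem_ker, hg₁, map_sub, map_zsmul, hg₀, hz, sub_self]
      obtain ⟨co', hco'⟩ := ht'gen (ρ g₁) ⟨g₁, hg₁G, rfl⟩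
      have hker : ∀ v, v ∈ π.ker → ρ v = 0 → v = 0 := by
        intro v hv hrv
        funext j
        refine Fin.lastCases ?_ ?_ j
        · simpa [π] using hv
        · intro i
          have := congrFun hrv i
          simpa [ρ] using this
      have hrest : g₁ - ∑ i, co' i • w i = 0 := by
        apply hker
        · exact sub_mem (AddSubgroup.mem_inf.mp hg₁G).2 (sum_mem (fun i _ => zsmul_mem (AddSubgroup.mem_inf.mp (hwmem i)).2 (co' i)))
        · rw [map_sub, map_sum]
          simp only [map_zsmul, hweq]
          rw [← hco']
          exact sub_self _
      refine ⟨Fin.snoc co' z, ?_⟩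
      rw [Fin.sum_univ_castSucc]
      simp only [Fin.snoc_castSucc, Fin.snoc_last]
      have : g = g₁ + z • g₀ := by rw [hg₁]; abel
      rw [this, ← sub_eq_zero]
      calc g₁ + z • g₀ - (∑ i, co' i • w i + z • g₀)
          = g₁ - ∑ i, co' i • w i := by abel
      _ = 0 := hrest

/-- Transport to pairs: any subgroup of `VV (ZMod N) c` has `2c` generators. -/
lemma vv_addSubgroup_gen (N c : ℕ) (G : AddSubgroup (VV (ZMod N) c)) :
    ∃ t : Fin (2*c) → VV (ZMod N) c, (∀ i, t i ∈ G) ∧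
      ∀ g ∈ G, ∃ co : Fin (2*c) → ℤ, g = ∑ i, co i • t i := by
  classical
  set A := ZMod N
  let e : VV A c ≃+ (Fin (c+c) → A) :=
    { toFun := fun u => Fin.append u.1 u.2
      invFun := fun v => (fun i => v (Fin.castAdd c i), fun i => v (Fin.natAdd c i))
      left_inv := by
        intro u
        refine Prod.ext ?_ ?_ <;> funext i
        · exact Fin.append_left u.1 u.2 i
        · exact Fin.append_right u.1 u.2 i
      right_inv := by
        intro v
        funext j
        refine Fin.addCases (fun i => ?_) (fun i => ?_) j
        · dsimp only
          rw [Fin.append_left]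
        · dsimp only
          rw [Fin.append_right]
      map_add' := by
        intro u v
        funext j
        refine Fin.addCases (fun i => ?_) (fun i => ?_) j
        · rw [Pi.add_apply, Fin.append_left, Fin.append_left, Fin.append_left]; rfl
        · rw [Pi.add_apply, Fin.append_right, Fin.append_right, Fin.append_right]; rfl }
  obtain ⟨t', ht'mem, ht'gen⟩ := pi_addSubgroup_gen N (c+c) (G.map e.toAddMonoidHom)
  refine ⟨fun i => e.symm (t' (finCongr (two_mul c) i)), fun i => ?_, fun g hg => ?_⟩
  · obtain ⟨u, hu, huq⟩ := ht'mem (finCongr (two_mul c) i)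
    dsimp only
    rw [← huq]
    simpa using hu
  · obtain ⟨co', hco'⟩ := ht'gen (e g) ⟨g, hg, rfl⟩
    refine ⟨fun i => co' (finCongr (two_mul c) i), ?_⟩
    have h5 := congrArg e.symm hco'
    rw [e.symm_apply_apply, map_sum] at h5
    rw [h5]
    exact (Fintype.sum_equiv (finCongr (two_mul c)) _ _ (fun i => (map_zsmul e.symm _ _).symm)).symm

section C4

variable {R : Type*} [CommRing R] {n c c' : ℕ}

/-- punct as a linear map. -/
def punctL (R : Type*) [CommRing R] (n c : ℕ) : VV R (n+c) →ₗ[R] VV R n where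
  toFun := punct n c
  map_add' u v := rfl
  map_smul' r u := rfl

@[simp] lemma punctL_apply (u : VV R (n+c)) : punctL R n c u = punct n c u := rfl

/-- the tail map as a linear map. -/
def tailL (R : Type*) [CommRing R] (n c : ℕ) : VV R (n+c) →ₗ[R] VV R c where
  toFun u := (fun i => u.1 (Fin.natAdd n i), fun i => u.2 (Fin.natAdd n i))
  map_add' u v := rfl
  map_smul' r u := rfl

lemma symp_split (u v : VV R (n+c)) :
    symp u v = symp (punct n c u) (punct n c v) + symp (tailL R n c u) (tailL R n c v) := by
  simp only [symp, punct, tailL, dotProduct, LinearMap.coe_mk, AddHom.coe_mk]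
  rw [Fin.sum_univ_add, Fin.sum_univ_add]
  ring

/-- embedding with one extra coordinate on each half -/
def emb {R : Type*} [CommRing R] {n : ℕ} (z : VV R n) (α β : R) : VV R (n+1) :=
  (Fin.snoc z.1 α, Fin.snoc z.2 β)

lemma punct_emb (z : VV R n) (α β : R) : punct n 1 (emb z α β) = z := by
  refine Prod.ext ?_ ?_ <;> funext i
  · exact Fin.snoc_castSucc (α := fun _ => R) α z.1 i
  · exact Fin.snoc_castSucc (α := fun _ => R) β z.2 i

lemma dot_snoc (x y : Fin n → R) (A B : R) :
    dotProduct (Fin.snoc x A : Fin (n+1) → R) (Fin.snoc y B) =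
      dotProduct x y + A * B := by
  simp [dotProduct, Fin.sum_univ_castSucc]

lemma symp_emb (z w : VV R n) (α β γ δ : R) :
    symp (emb z α β) (emb w γ δ) = symp z w + (β * γ - δ * α) := by
  simp only [symp, emb, dot_snoc]
  ring

/-- emb with zero tails is linear. -/
def embL (R : Type*) [CommRing R] (n : ℕ) : VV R n →ₗ[R] VV R (n+1) where
  toFun z := emb z 0 0
  map_add' u v := by
    refine Prod.ext ?_ ?_ <;> funext j <;>
      refine Fin.lastCases ?_ (fun i => ?_) j <;>
        simp [emb, Fin.snoc_castSucc, Fin.snoc_last]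
  map_smul' r u := by
    refine Prod.ext ?_ ?_ <;> funext j <;>
      refine Fin.lastCases ?_ (fun i => ?_) j <;>
        simp [emb, Fin.snoc_castSucc, Fin.snoc_last]

@[simp] lemma embL_apply (z : VV R n) : embL R n z = emb z 0 0 := rfl

/-- reindexing equivalence -/
def castV (R : Type*) [CommRing R] (n c c' : ℕ) : VV R ((n+c)+c') ≃ₗ[R] VV R (n+(c+c')) where
  toFun u := (fun i => u.1 (Fin.cast (add_assoc n c c').symm i),
              fun i => u.2 (Fin.cast (add_assoc n c c').symm i))
  invFun u := (fun i => u.1 (Fin.cast (add_assoc n c c') i),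
              fun i => u.2 (Fin.cast (add_assoc n c c') i))
  left_inv u := rfl
  right_inv u := rfl
  map_add' u v := rfl
  map_smul' r u := rfl

lemma symp_castV (u v : VV R ((n+c)+c')) :
    symp (castV R n c c' u) (castV R n c c' v) = symp u v := by
  simp only [symp, castV, dotProduct, LinearEquiv.coe_mk, LinearMap.coe_mk, AddHom.coe_mk]
  congr 1
  · exact Fintype.sum_equiv (finCongr (add_assoc n c c').symm) _ _ (fun i => rfl)
  · exact Fintype.sum_equiv (finCongr (add_assoc n c c').symm) _ _ (fun i => rfl)

lemma punct_castV (u : VV R ((n+c)+c')) :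
    punct n (c+c') (castV R n c c' u) = punct n c (punct (n+c) c' u) := by
  rfl

end C4
section Core
open scoped BigOperators

variable {Q : Type*} [CommRing Q] {n : ℕ}

lemma symp_zsmul_right (z : ℤ) (u v : VV Q n) : symp u (z • v) = (z : Q) * symp u v := by
  rw [symp_comm, symp_zsmul_left, symp_comm u v]; ring

lemma symp_sum_right {ι : Type*} (s : Finset ι) (u : VV Q n) (f : ι → VV Q n) :
    symp u (∑ i ∈ s, f i) = ∑ i ∈ s, symp u (f i) := by
  calc symp u (∑ i ∈ s, f i) = - symp (∑ i ∈ s, f i) u := symp_comm _ _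
  _ = - ∑ i ∈ s, symp (f i) u := by rw [symp_sum_left]
  _ = ∑ i ∈ s, -symp (f i) u := (Finset.sum_neg_distrib _).symm
  _ = ∑ i ∈ s, symp u (f i) := Finset.sum_congr rfl (fun i _ => (symp_comm u (f i)).symm)

/-- the symplectic-dual set. -/
def Dset {Q : Type*} [CommRing Q] (n : ℕ) (C : Set (VV Q n)) : Set (VV Q n) :=
  {v | ∀ x ∈ C, symp x v = 0}

/-- the symplectic dual as a submodule. -/
def Dsub {Q : Type*} [CommRing Q] {n : ℕ} (C : Set (VV Q n)) : Submodule Q (VV Q n) where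
  carrier := Dset n C
  add_mem' := by
    intro u v hu hv x hx
    rw [symp_add_right, hu x hx, hv x hx, add_zero]
  zero_mem' := fun x _ => symp_zero_right x
  smul_mem' := by
    intro r v hv x hx
    rw [symp_smul_right, hv x hx, mul_zero]

@[simp] lemma mem_Dsub {C : Set (VV Q n)} {v : VV Q n} :
    v ∈ Dsub C ↔ v ∈ Dset n C := Iff.rfl

lemma selforth_of_gram (C : Submodule Q (VV Q n)) {ι : Type*} [Fintype ι]
    (f : ι → VV Q n) (hf : ∀ i, f i ∈ C)
    (hgen : ∀ x ∈ C, ∃ g : ι → ℤ, x - ∑ i, g i • f i ∈ Dset n (C : Set (VV Q n)))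
    (hGram : ∀ i j, symp (f i) (f j) = 0) :
    ∀ x ∈ C, ∀ y ∈ C, symp x y = 0 := by
  intro x hx y hy
  obtain ⟨gx, hdx⟩ := hgen x hx
  obtain ⟨gy, hdy⟩ := hgen y hy
  set sx := ∑ i, gx i • f i with hsx
  set sy := ∑ i, gy i • f i with hsy
  have hsxC : sx ∈ C := sum_mem (fun i _ => zsmul_mem (hf i) (gx i))
  have hsyC : sy ∈ C := sum_mem (fun i _ => zsmul_mem (hf i) (gy i))
  have h1 : symp sx sy = 0 := by
    rw [hsx, symp_sum_left]
    refine Finset.sum_eq_zero (fun i _ => ?_)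
    rw [symp_zsmul_left, hsy, symp_sum_right]
    have : ∀ j ∈ Finset.univ, symp (f i) (gy j • f j) = 0 := by
      intro j _
      rw [symp_zsmul_right, hGram i j, mul_zero]
    rw [Finset.sum_congr rfl this, Finset.sum_const_zero, mul_zero]
  have h2 : symp sx (y - sy) = 0 := hdy sx hsxC
  have h3 : ∀ z, z ∈ C → symp (x - sx) z = 0 := by
    intro z hz
    rw [symp_comm, hdx z hz, neg_zero]
  calc symp x y = symp (sx + (x - sx)) y := by rw [add_sub_cancel]
  _ = symp sx y + symp (x - sx) y := symp_add_left _ _ _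
  _ = symp sx (sy + (y - sy)) + 0 := by rw [h3 y hy, add_sub_cancel]
  _ = (symp sx sy + symp sx (y - sy)) + 0 := by rw [symp_add_right]
  _ = 0 := by rw [h1, h2]; ring
end Core

section UB
open scoped BigOperators

lemma punct_zero_eq {Q : Type*} [CommRing Q] {n : ℕ} (u : VV Q (n+0)) : punct n 0 u = u := by
  refine Prod.ext ?_ ?_ <;> funext i <;> rfl

lemma ub_main (p a : ℕ) (hp : p.Prime) :
    ∀ (k n : ℕ) (C : Submodule (ZMod (p^a)) (VV (ZMod (p^a)) n))
      (ι : Type) (_ : Fintype ι) (f : ι → VV (ZMod (p^a)) n),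
      Fintype.card ι = k → (∀ i, f i ∈ C) →
      (∀ x ∈ C, ∃ g : ι → ℤ, x - ∑ i, g i • f i ∈ Dset n (C : Set (VV (ZMod (p^a)) n))) →
      ∃ (c : ℕ) (C' : Submodule (ZMod (p^a)) (VV (ZMod (p^a)) (n+c))),
        2*c ≤ k ∧ (∀ x ∈ C', ∀ y ∈ C', symp x y = 0) ∧
        punct n c '' (C' : Set (VV (ZMod (p^a)) (n+c))) = (C : Set (VV (ZMod (p^a)) n)) := by
  intro k
  induction k using Nat.strong_induction_on with
  | _ k IH =>
  intro n C ι inst f hcard hf hgen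
  classical
  by_cases h0 : ∀ i j, symp (f i) (f j) = 0
  · refine ⟨0, C, by omega, selforth_of_gram C f hf hgen h0, ?_⟩
    have hpz : punct (R := ZMod (p^a)) n 0 = id := funext (fun u => punct_zero_eq u)
    rw [hpz, Set.image_id]
  · -- there is a nonzero Gram entry
    have hex : ∃ q : ι × ι, symp (f q.1) (f q.2) ≠ 0 := by
      push_neg at h0
      obtain ⟨i, j, h⟩ := h0
      exact ⟨(i, j), h⟩
    obtain ⟨q0, hq0ne, hdvd⟩ :=
      exists_dvd_all (a := a) hp (fun q : ι × ι => symp (f q.1) (f q.2)) hex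
    set i₀ := q0.1 with hi₀
    set j₀ := q0.2 with hj₀
    set x := f i₀ with hx
    set y := f j₀ with hy
    set lam := symp x y with hlam
    have hlam0 : lam ≠ 0 := hq0ne
    have hij : i₀ ≠ j₀ := by
      intro h
      apply hlam0
      rw [hlam, hx, hy, h, symp_self]
    have hk2 : 2 ≤ k := by
      rw [← hcard]
      have := Fintype.one_lt_card_iff.mpr ⟨i₀, j₀, hij⟩
      omega
    -- corrections
    have hdvd1 : ∀ i, lam ∣ symp (f i) x := fun i => hdvd (i, i₀)
    have hdvd2 : ∀ i, lam ∣ symp (f i) y := fun i => hdvd (i, j₀)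
    choose bb hbb using hdvd1
    choose cc hcc using hdvd2
    set gg : ι → VV (ZMod (p^a)) n := fun i => f i + bb i • y - cc i • x with hgg
    have hgx : ∀ i, symp (gg i) x = 0 := by
      intro i
      rw [hgg]
      simp only [symp_sub_left, symp_add_left, symp_smul_left]
      rw [hbb i, symp_comm y x, ← hlam, symp_self]
      ring
    have hgy : ∀ i, symp (gg i) y = 0 := by
      intro i
      rw [hgg]
      simp only [symp_sub_left, symp_add_left, symp_smul_left]
      rw [hcc i, symp_self, ← hlam]
      ring
    have hggC : ∀ i, gg i ∈ C :=
      fun i => sub_mem (add_mem (hf i) (Submodule.smul_mem _ _ (hf j₀)))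
        (Submodule.smul_mem _ _ (hf i₀))
    -- new generators in ambient n+1
    set X : VV (ZMod (p^a)) (n+1) := emb x lam 0 with hX
    set Y : VV (ZMod (p^a)) (n+1) := emb y 0 1 with hY
    set F : {i : ι // i ≠ i₀ ∧ i ≠ j₀} → VV (ZMod (p^a)) (n+1) := fun i => emb (gg i.1) 0 0 with hF
    set S : Set (VV (ZMod (p^a)) (n+1)) :=
      Set.range F ∪ {X, Y} ∪ (fun d => emb d 0 0) '' (Dset n (C : Set (VV (ZMod (p^a)) n)) ∩ (C : Set (VV (ZMod (p^a)) n))) with hS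
    set C₁ := Submodule.span (ZMod (p^a)) S with hC₁
    have hXS : X ∈ S := Or.inl (Or.inr (by simp))
    have hYS : Y ∈ S := Or.inl (Or.inr (by simp))
    have hFS : ∀ i, F i ∈ S := fun i => Or.inl (Or.inl ⟨i, rfl⟩)
    -- orthogonality of special generators to everything in C₁
    have horthX : ∀ u ∈ C₁, symp u X = 0 := by
      intro u hu
      induction hu using Submodule.span_induction with
      | mem w hw =>
        rcases hw with (hw | hw) | hw
        · obtain ⟨i, rfl⟩ := hw
          rw [hF, hX, symp_emb, hgx]
          ring
        · rcases hw with rfl | hw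
          · exact symp_self _
          · rw [Set.mem_singleton_iff] at hw
            subst hw
            rw [hY, hX, symp_emb, (symp_comm y x).trans (by rw [← hlam])]
            ring
        · obtain ⟨d, hd, rfl⟩ := hw
          rw [hX, symp_emb]
          have : symp d x = 0 := by
            rw [symp_comm, hd.1 x (hf i₀), neg_zero]
          rw [this]; ring
      | zero => exact symp_zero_left _
      | add w₁ w₂ h₁ h₂ ih₁ ih₂ => rw [symp_add_left, ih₁, ih₂, add_zero]
      | smul r w hw ih => rw [symp_smul_left, ih, mul_zero]
    have horthY : ∀ u ∈ C₁, symp u Y = 0 := by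
      intro u hu
      induction hu using Submodule.span_induction with
      | mem w hw =>
        rcases hw with (hw | hw) | hw
        · obtain ⟨i, rfl⟩ := hw
          rw [hF, hY, symp_emb, hgy]
          ring
        · rcases hw with rfl | hw
          · rw [hX, hY, symp_emb, ← hlam]
            ring
          · rw [Set.mem_singleton_iff] at hw
            subst hw
            exact symp_self _
        · obtain ⟨d, hd, rfl⟩ := hw
          rw [hY, symp_emb]
          have : symp d y = 0 := by
            rw [symp_comm, hd.1 y (hf j₀), neg_zero]
          rw [this]; ring
      | zero => exact symp_zero_left _
      | add w₁ w₂ h₁ h₂ ih₁ ih₂ => rw [symp_add_left, ih₁, ih₂, add_zero]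
      | smul r w hw ih => rw [symp_smul_left, ih, mul_zero]
    have horthD : ∀ d, d ∈ Dset n (C : Set (VV (ZMod (p^a)) n)) ∩ (C : Set (VV (ZMod (p^a)) n)) →
        ∀ u ∈ C₁, symp u (emb d 0 0) = 0 := by
      intro d hd u hu
      induction hu using Submodule.span_induction with
      | mem w hw =>
        rcases hw with (hw | hw) | hw
        · obtain ⟨i, rfl⟩ := hw
          rw [hF, symp_emb]
          rw [hd.1 (gg i.1) (hggC i.1)]
          ring
        · rcases hw with rfl | hw
          · rw [hX, symp_emb, hd.1 x (hf i₀)]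
            ring
          · rw [Set.mem_singleton_iff] at hw
            subst hw
            rw [hY, symp_emb, hd.1 y (hf j₀)]
            ring
        · obtain ⟨d', hd', rfl⟩ := hw
          rw [symp_emb]
          rw [hd.1 d' hd'.2]
          ring
      | zero => exact symp_zero_left _
      | add w₁ w₂ h₁ h₂ ih₁ ih₂ => rw [symp_add_left, ih₁, ih₂, add_zero]
      | smul r w hw ih => rw [symp_smul_left, ih, mul_zero]
    -- membership of specials in the dual of C₁
    have hXD : X ∈ Dset (n+1) (C₁ : Set (VV (ZMod (p^a)) (n+1))) := fun u hu => horthX u hu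
    have hYD : Y ∈ Dset (n+1) (C₁ : Set (VV (ZMod (p^a)) (n+1))) := fun u hu => horthY u hu
    have hDD : ∀ d, d ∈ Dset n (C : Set (VV (ZMod (p^a)) n)) ∩ (C : Set (VV (ZMod (p^a)) n)) →
        emb d 0 0 ∈ Dset (n+1) (C₁ : Set (VV (ZMod (p^a)) (n+1))) := fun d hd u hu => horthD d hd u hu
    -- generation of C₁ modulo its dual by F
    have hgen₁ : ∀ w ∈ C₁, ∃ co : {i : ι // i ≠ i₀ ∧ i ≠ j₀} → ℤ,
        w - ∑ i, co i • F i ∈ Dset (n+1) (C₁ : Set (VV (ZMod (p^a)) (n+1))) := by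
      intro w hw
      induction hw using Submodule.span_induction with
      | mem w hw =>
        rcases hw with (hw | hw) | hw
        · obtain ⟨i, rfl⟩ := hw
          refine ⟨fun j => if j = i then 1 else 0, ?_⟩
          have : (∑ j, (if j = i then (1:ℤ) else 0) • F j) = F i := by
            simp [ite_smul]
          rw [this, sub_self]
          exact fun z _ => symp_zero_right z
        · rcases hw with rfl | hw
          · refine ⟨0, ?_⟩
            have hzs : X - ∑ i, (0 : {i : ι // i ≠ i₀ ∧ i ≠ j₀} → ℤ) i • F i = X := by simp
            rw [hzs]; exact hXD
          · rw [Set.mem_singleton_iff] at hw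
            subst hw
            refine ⟨0, ?_⟩
            have hzs : Y - ∑ i, (0 : {i : ι // i ≠ i₀ ∧ i ≠ j₀} → ℤ) i • F i = Y := by simp
            rw [hzs]; exact hYD
        · obtain ⟨d, hd, rfl⟩ := hw
          refine ⟨0, ?_⟩
          have hzs : emb d 0 0 - ∑ i, (0 : {i : ι // i ≠ i₀ ∧ i ≠ j₀} → ℤ) i • F i = emb d 0 0 := by simp
          rw [hzs]; exact hDD d hd
      | zero =>
        refine ⟨0, ?_⟩
        have hzs : (0 : VV (ZMod (p^a)) (n+1)) - ∑ i, (0 : {i : ι // i ≠ i₀ ∧ i ≠ j₀} → ℤ) i • F i = 0 := by simp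
        rw [hzs]; exact fun z _ => symp_zero_right z
      | add w₁ w₂ h₁ h₂ ih₁ ih₂ =>
        obtain ⟨co₁, hco₁⟩ := ih₁
        obtain ⟨co₂, hco₂⟩ := ih₂
        refine ⟨co₁ + co₂, ?_⟩
        have heq : w₁ + w₂ - ∑ i, (co₁ + co₂) i • F i
            = (w₁ - ∑ i, co₁ i • F i) + (w₂ - ∑ i, co₂ i • F i) := by
          simp only [Pi.add_apply, add_zsmul, Finset.sum_add_distrib]
          abel
        rw [heq]
        intro z hz
        rw [symp_add_right, hco₁ z hz, hco₂ z hz, add_zero]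
      | smul r w hw ih =>
        obtain ⟨co, hco⟩ := ih
        refine ⟨fun i => (r.val : ℤ) * co i, ?_⟩
        have hr : ((r.val : ℤ) : ZMod (p^a)) = r := by
          rw [Int.cast_natCast]
          exact zmod_natCast_val_eq hp r
        have hzz : r • w = (r.val : ℤ) • w := by
          have h' := Int.cast_smul_eq_zsmul (ZMod (p^a)) ((r.val : ℤ)) w
          rwa [hr] at h'
        have : r • w - ∑ i, ((r.val : ℤ) * co i) • F i
            = (r.val : ℤ) • (w - ∑ i, co i • F i) := by
          rw [hzz, smul_sub, Finset.smul_sum]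
          congr 1
          exact Finset.sum_congr rfl (fun i _ => (mul_smul _ _ _))
        rw [this]
        intro z hz
        rw [symp_zsmul_right, hco z hz, mul_zero]
    -- punctured image of C₁ is C
    have hpim : punct n 1 '' (C₁ : Set (VV (ZMod (p^a)) (n+1))) = (C : Set (VV (ZMod (p^a)) n)) := by
      have hmap : Submodule.map (punctL (ZMod (p^a)) n 1) C₁ = C := by
        rw [hC₁, Submodule.map_span]
        apply le_antisymm
        · rw [Submodule.span_le]
          rintro z ⟨u, hu, rfl⟩
          rcases hu with (hu | hu) | hu
          · obtain ⟨i, rfl⟩ := hu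
            simpa [hF, punct_emb] using hggC i.1
          · rcases hu with rfl | hu
            · simpa [hX, punct_emb] using hf i₀
            · rw [Set.mem_singleton_iff] at hu
              subst hu
              simpa [hY, punct_emb] using hf j₀
          · obtain ⟨d, hd, rfl⟩ := hu
            simpa [punct_emb] using hd.2
        · intro z hz
          obtain ⟨g, hd⟩ := hgen z hz
          have hfspan : ∀ i, f i ∈ Submodule.span (ZMod (p^a))
              (punctL (ZMod (p^a)) n 1 '' S) := by
            intro i
            have hxs : x ∈ punctL (ZMod (p^a)) n 1 '' S :=
              ⟨X, hXS, by simp [hX, punct_emb]⟩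
            have hys : y ∈ punctL (ZMod (p^a)) n 1 '' S :=
              ⟨Y, hYS, by simp [hY, punct_emb]⟩
            by_cases hii : i = i₀
            · subst hii
              exact Submodule.subset_span hxs
            · by_cases hjj : i = j₀
              · subst hjj
                exact Submodule.subset_span hys
              · have hgs : gg i ∈ punctL (ZMod (p^a)) n 1 '' S :=
                  ⟨F ⟨i, hii, hjj⟩, hFS _, by simp [hF, punct_emb]⟩
                have : f i = gg i - bb i • y + cc i • x := by
                  simp only [hgg]
                  abel
                rw [this]
                exact Submodule.add_mem _
                  (Submodule.sub_mem _ (Submodule.subset_span hgs)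
                    (Submodule.smul_mem _ _ (Submodule.subset_span hys)))
                  (Submodule.smul_mem _ _ (Submodule.subset_span hxs))
          have hdC : z - ∑ i, g i • f i ∈ Dset n (C : Set (VV (ZMod (p^a)) n)) ∩ (C : Set (VV (ZMod (p^a)) n)) := by
            refine ⟨hd, ?_⟩
            exact sub_mem hz (sum_mem (fun i _ => zsmul_mem (hf i) (g i)))
          have hdspan : z - ∑ i, g i • f i ∈ Submodule.span (ZMod (p^a))
              (punctL (ZMod (p^a)) n 1 '' S) := by
            refine Submodule.subset_span ⟨emb (z - ∑ i, g i • f i) 0 0, ?_, by simp [punct_emb]⟩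
            exact Or.inr ⟨z - ∑ i, g i • f i, hdC, rfl⟩
          have hsum : (∑ i, g i • f i) ∈ Submodule.span (ZMod (p^a))
              (punctL (ZMod (p^a)) n 1 '' S) :=
            sum_mem (fun i _ => zsmul_mem (hfspan i) (g i))
          have hfin := Submodule.add_mem _ hsum hdspan
          rwa [add_sub_cancel] at hfin
      calc punct n 1 '' (C₁ : Set (VV (ZMod (p^a)) (n+1)))
          = (Submodule.map (punctL (ZMod (p^a)) n 1) C₁ : Set _) := by
            rw [Submodule.map_coe]; rfl
      _ = (C : Set (VV (ZMod (p^a)) n)) := by rw [hmap]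
    -- apply induction hypothesis
    have hcard1 : Fintype.card {i : ι // i ≠ i₀ ∧ i ≠ j₀} = k - 2 := by
      rw [Fintype.card_subtype]
      have heq : Finset.univ.filter (fun i : ι => i ≠ i₀ ∧ i ≠ j₀)
          = Finset.univ \ {i₀, j₀} := by
        ext i
        simp only [Finset.mem_filter, Finset.mem_univ, true_and, Finset.mem_sdiff,
          Finset.mem_insert, Finset.mem_singleton]
        tauto
      rw [heq, Finset.card_sdiff_of_subset (Finset.subset_univ _), Finset.card_univ, hcard,
        Finset.card_pair hij]
    obtain ⟨c₁, C'', h2c, horth'', himg''⟩ :=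
      IH (k - 2) (by omega) (n+1) C₁ {i : ι // i ≠ i₀ ∧ i ≠ j₀} inferInstance F hcard1
        (fun i => Submodule.subset_span (hFS i)) hgen₁
    -- compose extensions
    refine ⟨1 + c₁, Submodule.map ((castV (ZMod (p^a)) n 1 c₁).toLinearMap
        : VV (ZMod (p^a)) ((n+1)+c₁) →ₗ[ZMod (p^a)] VV (ZMod (p^a)) (n+(1+c₁))) C'',
      by omega, ?_, ?_⟩
    · rintro x' hx' y' hy'
      obtain ⟨u, hu, rfl⟩ := hx'
      obtain ⟨v, hv, rfl⟩ := hy'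
      rw [LinearEquiv.coe_toLinearMap]
      rw [symp_castV]
      exact horth'' u hu v hv
    · have h1 : (Submodule.map ((castV (ZMod (p^a)) n 1 c₁).toLinearMap) C'' : Set _)
          = (castV (ZMod (p^a)) n 1 c₁) '' (C'' : Set (VV (ZMod (p^a)) ((n+1)+c₁))) := by
        rw [Submodule.map_coe]; rfl
      rw [h1, ← Set.image_comp]
      have h2 : (punct n (1 + c₁) ∘ (castV (ZMod (p^a)) n 1 c₁))
          = (punct n 1) ∘ (punct (n+1) c₁) := by
        funext u
        exact punct_castV u
      rw [h2, Set.image_comp, himg'', hpim]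

end UB

section LB
open scoped BigOperators

lemma lb_main (p a n c : ℕ) (hp : p.Prime)
    (C : Submodule (ZMod (p^a)) (VV (ZMod (p^a)) n))
    (C' : AddSubgroup (VV (ZMod (p^a)) (n+c)))
    (horth : ∀ u ∈ C', ∀ v ∈ C', symp u v = 0)
    (himg : punct n c '' (C' : Set (VV (ZMod (p^a)) (n+c))) = (C : Set (VV (ZMod (p^a)) n))) :
    ∃ f : Fin (2*c) → VV (ZMod (p^a)) n, (∀ i, f i ∈ (C : Set (VV (ZMod (p^a)) n))) ∧
      ∀ x ∈ (C : Set (VV (ZMod (p^a)) n)), ∃ g : Fin (2*c) → ℤ,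
        x - ∑ i, g i • f i ∈ Dset n (C : Set (VV (ZMod (p^a)) n)) := by
  classical
  set T := (tailL (ZMod (p^a)) n c).toAddMonoidHom with hT
  set G := C'.map T with hG
  obtain ⟨t, htG, htgen⟩ := vv_addSubgroup_gen (p^a) c G
  have hpre : ∀ i, ∃ w, w ∈ C' ∧ T w = t i := by
    intro i
    obtain ⟨w, hw, hweq⟩ := htG i
    exact ⟨w, hw, hweq⟩
  choose u huC' hut using hpre
  refine ⟨fun i => punct n c (u i), fun i => ?_, fun x hx => ?_⟩
  · rw [← himg]
    exact ⟨u i, huC' i, rfl⟩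
  · rw [← himg] at hx
    obtain ⟨w, hwC', hwx⟩ := hx
    obtain ⟨co, hco⟩ := htgen (T w) ⟨w, hwC', rfl⟩
    set ww := w - ∑ i, co i • u i with hww
    have hwwC' : ww ∈ C' := sub_mem hwC' (sum_mem (fun i _ => zsmul_mem (huC' i) (co i)))
    have hTww : T ww = 0 := by
      rw [hww, map_sub, map_sum]
      simp only [map_zsmul, hut]
      rw [← hco, sub_self]
    have hpww : punct n c ww = x - ∑ i, co i • (punct n c (u i)) := by
      have h1 : punct n c ww = punctL (ZMod (p^a)) n c ww := rfl
      rw [h1, hww, map_sub, map_sum]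
      simp only [map_zsmul]
      rw [← hwx]
      rfl
    refine ⟨co, ?_⟩
    rw [← hpww]
    intro z hz
    rw [← himg] at hz
    obtain ⟨wz, hwzC', rfl⟩ := hz
    have hTww' : tailL (ZMod (p^a)) n c ww = 0 := hTww
    have hsplit := symp_split wz ww
    rw [horth wz hwzC' ww hwwC', hTww', symp_zero_right, add_zero] at hsplit
    exact hsplit.symm

lemma relrank_set_nonempty (p a n : ℕ) (hp : p.Prime)
    (C : Submodule (ZMod (p^a)) (VV (ZMod (p^a)) n)) :
    {k : ℕ | ∃ f : Fin k → VV (ZMod (p^a)) n,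
      (∀ i, f i ∈ (C : Set (VV (ZMod (p^a)) n))) ∧
      ∀ x ∈ (C : Set (VV (ZMod (p^a)) n)), ∃ g : Fin k → ℤ,
        x - ∑ i, g i • f i ∈ Dset n (C : Set (VV (ZMod (p^a)) n))}.Nonempty := by
  classical
  haveI : NeZero (p^a) := ⟨pow_ne_zero a hp.ne_zero⟩
  haveI : Fintype {x : VV (ZMod (p^a)) n // x ∈ C} := Fintype.ofFinite _
  set e := Fintype.equivFin {x : VV (ZMod (p^a)) n // x ∈ C} with he
  refine ⟨Fintype.card {x : VV (ZMod (p^a)) n // x ∈ C},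
    fun i => (e.symm i : {x : VV (ZMod (p^a)) n // x ∈ C}).1,
    fun i => (e.symm i).2, fun x hx => ?_⟩
  set i := e ⟨x, hx⟩ with hi
  refine ⟨fun j => if j = i then 1 else 0, ?_⟩
  have hsum : (∑ j, (if j = i then (1:ℤ) else 0) • ((e.symm j : {x : VV (ZMod (p^a)) n // x ∈ C}) : VV (ZMod (p^a)) n)) = x := by
    rw [Finset.sum_eq_single i]
    · simp [hi]
    · intro b _ hb
      simp [hb]
    · intro h
      exact absurd (Finset.mem_univ i) h
  rw [hsum, sub_self]
  exact fun z _ => symp_zero_right z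

end LB

theorem stmt_12 (p a n : ℕ) (hp : p.Prime) (ha : 1 ≤ a)
    (C : Submodule (ZMod (p ^ a)) ((Fin n → ZMod (p ^ a)) × (Fin n → ZMod (p ^ a)))) :
    ∃ c0 : ℕ,
      2 * c0 = relRank (C : Set ((Fin n → ZMod (p ^ a)) × (Fin n → ZMod (p ^ a))))
          {v : (Fin n → ZMod (p ^ a)) × (Fin n → ZMod (p ^ a)) |
            ∀ x ∈ C, symp x v = 0} ∧
      IsLeast {c : ℕ |
        ∃ C' : AddSubgroup ((Fin (n + c) → ZMod (p ^ a)) × (Fin (n + c) → ZMod (p ^ a))),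
          (∀ x ∈ C', ∀ y ∈ C', chiZ p a (symp x y) = 1) ∧
          punct n c '' (C' : Set ((Fin (n + c) → ZMod (p ^ a)) × (Fin (n + c) → ZMod (p ^ a)))) = (C : Set ((Fin n → ZMod (p ^ a)) × (Fin n → ZMod (p ^ a))))} c0 := by
  classical
  have hDeq : {v : (Fin n → ZMod (p ^ a)) × (Fin n → ZMod (p ^ a)) |
      ∀ x ∈ C, symp x v = 0} = Dset n (C : Set (VV (ZMod (p^a)) n)) := rfl
  set k := relRank (C : Set ((Fin n → ZMod (p ^ a)) × (Fin n → ZMod (p ^ a))))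
      {v : (Fin n → ZMod (p ^ a)) × (Fin n → ZMod (p ^ a)) | ∀ x ∈ C, symp x v = 0} with hk
  have hrelset : k = sInf {m : ℕ | ∃ f : Fin m → VV (ZMod (p^a)) n,
      (∀ i, f i ∈ (C : Set (VV (ZMod (p^a)) n))) ∧
      ∀ x ∈ (C : Set (VV (ZMod (p^a)) n)), ∃ g : Fin m → ℤ,
        x - ∑ i, g i • f i ∈ Dset n (C : Set (VV (ZMod (p^a)) n))} := rfl
  have hne := relrank_set_nonempty p a n hp C
  have hkmem := Nat.sInf_mem hne
  rw [← hrelset] at hkmem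
  obtain ⟨f, hf, hgen⟩ := hkmem
  obtain ⟨cw, C'w, h2cw, horthw, himgw⟩ :=
    ub_main p a hp k n C (Fin k) inferInstance f (Fintype.card_fin k) hf hgen
  set ES := {c : ℕ |
        ∃ C' : AddSubgroup ((Fin (n + c) → ZMod (p ^ a)) × (Fin (n + c) → ZMod (p ^ a))),
          (∀ x ∈ C', ∀ y ∈ C', chiZ p a (symp x y) = 1) ∧
          punct n c '' (C' : Set ((Fin (n + c) → ZMod (p ^ a)) × (Fin (n + c) → ZMod (p ^ a)))) = (C : Set ((Fin n → ZMod (p ^ a)) × (Fin n → ZMod (p ^ a))))} with hES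
  have hcwES : cw ∈ ES := by
    refine ⟨C'w.toAddSubgroup, ?_, ?_⟩
    · intro x hx y hy
      have h0 : symp x y = 0 := horthw x hx y hy
      rw [h0]
      exact (chiZ_eq_one_iff p a hp 0).mpr rfl
    · exact himgw
  have hESne : ES.Nonempty := ⟨cw, hcwES⟩
  refine ⟨sInf ES, ?_, Nat.sInf_mem hESne, fun b hb => Nat.sInf_le hb⟩
  have hle1 : 2 * sInf ES ≤ k :=
    le_trans (Nat.mul_le_mul_left 2 (Nat.sInf_le hcwES)) h2cw
  have hge : k ≤ 2 * sInf ES := by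
    obtain ⟨C'0, hchi, himg0⟩ := Nat.sInf_mem hESne
    have horth0 : ∀ u ∈ C'0, ∀ v ∈ C'0, symp u v = 0 := fun u hu v hv =>
      (chiZ_eq_one_iff p a hp _).mp (hchi u hu v hv)
    obtain ⟨f2, hf2, hgen2⟩ := lb_main p a n (sInf ES) hp C C'0 horth0 himg0
    rw [hrelset]
    exact Nat.sInf_le ⟨f2, hf2, hgen2⟩
  exact le_antisymm hle1 hge
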